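/- For each integer j ≥ 1, the function φ_j(p) := 1 - (∫₀¹ (1-py)^{-1} y^j dy)/(∫₀¹ (1-py)^{-1} y^{j-1} dy) is strictly decreasing on (0,1). -/

import Mathlib

open Real MeasureTheory Set

lemma den_pos6 {r y : ℝ} (hr0 : 0 ≤ r) (hr : r < 1) (hy0 : 0 ≤ y) (hy1 : y ≤ 1) :
    0 < 1 - r * y := by nlinarith

lemma contOn6 {r : ℝ} (hr0 : 0 ≤ r) (hr : r < 1) (k : ℕ) :
    ContinuousOn (fun y : ℝ => (1 - r * y)⁻¹ * y ^ k) (Icc 0 1) := by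
  refine ContinuousOn.mul (ContinuousOn.inv₀ ?_ ?_) (continuous_pow k).continuousOn
  · exact (continuous_const.sub (continuous_const.mul continuous_id)).continuousOn
  · exact fun y hy => (den_pos6 hr0 hr hy.1 hy.2).ne'

lemma intble6 {r : ℝ} (hr0 : 0 ≤ r) (hr : r < 1) (k : ℕ) {a b : ℝ}
    (ha : a ∈ Icc (0:ℝ) 1) (hb : b ∈ Icc (0:ℝ) 1) :
    IntervalIntegrable (fun y : ℝ => (1 - r * y)⁻¹ * y ^ k) volume a b :=
  ((contOn6 hr0 hr k).mono (uIcc_subset_Icc ha hb)).intervalIntegrable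

lemma intpos6 {r : ℝ} (hr0 : 0 ≤ r) (hr : r < 1) (k : ℕ) :
    0 < ∫ y in (0:ℝ)..1, (1 - r * y)⁻¹ * y ^ k := by
  refine intervalIntegral.intervalIntegral_pos_of_pos_on
    (intble6 hr0 hr k (left_mem_Icc.2 one_pos.le) (right_mem_Icc.2 one_pos.le))
    (fun y hy => mul_pos (inv_pos.2 (den_pos6 hr0 hr hy.1.le hy.2.le)) (pow_pos hy.1 k)) one_pos

/-- `∫ y^(n+1) w < ∫ y^n w` -/
lemma intlt6 {r : ℝ} (hr0 : 0 ≤ r) (hr : r < 1) (n : ℕ) :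
    (∫ y in (0:ℝ)..1, (1 - r * y)⁻¹ * y ^ (n+1)) < ∫ y in (0:ℝ)..1, (1 - r * y)⁻¹ * y ^ n := by
  have h01 : (0:ℝ) ∈ Icc (0:ℝ) 1 := left_mem_Icc.2 one_pos.le
  have h11 : (1:ℝ) ∈ Icc (0:ℝ) 1 := right_mem_Icc.2 one_pos.le
  have key : 0 < ∫ y in (0:ℝ)..1,
      ((1 - r * y)⁻¹ * y ^ n - (1 - r * y)⁻¹ * y ^ (n+1)) := by
    refine intervalIntegral.intervalIntegral_pos_of_pos_on
      ((intble6 hr0 hr n h01 h11).sub (intble6 hr0 hr (n+1) h01 h11)) (fun y hy => ?_) one_pos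
    have h1 : 0 < (1 - r * y)⁻¹ := inv_pos.2 (den_pos6 hr0 hr hy.1.le hy.2.le)
    have h2 : y ^ (n+1) < y ^ n := by
      calc y ^ (n+1) = y ^ n * y := pow_succ y n
      _ < y ^ n * 1 := by exact mul_lt_mul_of_pos_left hy.2 (pow_pos hy.1 n)
      _ = y ^ n := mul_one _
    nlinarith
  rw [intervalIntegral.integral_sub (intble6 hr0 hr n h01 h11)
      (intble6 hr0 hr (n+1) h01 h11)] at key
  linarith

theorem stmt6 (j : ℕ) (hj : 1 ≤ j) :
    StrictAntiOn
      (fun p : ℝ =>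
        1 - (∫ y in (0:ℝ)..1, (1 - p * y)⁻¹ * y ^ j) /
            (∫ y in (0:ℝ)..1, (1 - p * y)⁻¹ * y ^ (j - 1)))
      (Ioo (0:ℝ) 1) := by
  obtain ⟨n, rfl⟩ : ∃ n, j = n + 1 := ⟨j - 1, (Nat.succ_pred_eq_of_pos hj).symm⟩
  simp only [Nat.add_sub_cancel]
  intro p hp q hq hpq
  simp only
  have hp0 : (0:ℝ) ≤ p := hp.1.le
  have hq0 : (0:ℝ) ≤ q := hq.1.le
  have hp1 : p < 1 := hp.2
  have hq1 : q < 1 := hq.2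
  have h01 : (0:ℝ) ∈ Icc (0:ℝ) 1 := left_mem_Icc.2 one_pos.le
  have h11 : (1:ℝ) ∈ Icc (0:ℝ) 1 := right_mem_Icc.2 one_pos.le
  set Ap : ℝ := ∫ y in (0:ℝ)..1, (1 - p * y)⁻¹ * y ^ (n+1) with hAp
  set Bp : ℝ := ∫ y in (0:ℝ)..1, (1 - p * y)⁻¹ * y ^ n with hBp
  set Aq : ℝ := ∫ y in (0:ℝ)..1, (1 - q * y)⁻¹ * y ^ (n+1) with hAq
  set Bq : ℝ := ∫ y in (0:ℝ)..1, (1 - q * y)⁻¹ * y ^ n with hBq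
  have hApos : 0 < Ap := intpos6 hp0 hp1 (n+1)
  have hBpos : 0 < Bp := intpos6 hp0 hp1 n
  have hAqpos : 0 < Aq := intpos6 hq0 hq1 (n+1)
  have hBqpos : 0 < Bq := intpos6 hq0 hq1 n
  -- suffices : Ap / Bp < Aq / Bq
  rw [sub_lt_sub_iff_left, div_lt_div_iff₀ hBpos hBqpos]
  set m : ℝ := Ap / Bp with hm
  have hm0 : 0 < m := div_pos hApos hBpos
  have hm1 : m < 1 := (div_lt_one hBpos).2 (intlt6 hp0 hp1 n)
  have hmIcc : m ∈ Icc (0:ℝ) 1 := ⟨hm0.le, hm1.le⟩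
  -- the increasing factor h
  set h : ℝ → ℝ := fun y => (1 - p * y) * (1 - q * y)⁻¹ with hh
  have hmono : ∀ a ∈ Icc (0:ℝ) 1, ∀ b ∈ Icc (0:ℝ) 1, a < b → h a < h b := by
    intro a ha b hb hab
    have da : 0 < 1 - q * a := den_pos6 hq0 hq1 ha.1 ha.2
    have db : 0 < 1 - q * b := den_pos6 hq0 hq1 hb.1 hb.2
    rw [hh]
    simp only
    rw [← div_eq_mul_inv, ← div_eq_mul_inv, div_lt_div_iff₀ da db]
    nlinarith [mul_pos (sub_pos.2 hpq) (sub_pos.2 hab)]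
  set c : ℝ := h m with hc
  -- the integrand of the covariance integral
  set F : ℝ → ℝ := fun y => ((1 - p * y)⁻¹ * y ^ n) * ((y - m) * (h y - c)) with hF
  have hFcont : ContinuousOn F (Icc 0 1) := by
    refine (contOn6 hp0 hp1 n).mul (ContinuousOn.mul ?_ ?_)
    · exact (continuous_id.sub continuous_const).continuousOn
    · refine ContinuousOn.sub (ContinuousOn.mul ?_ (ContinuousOn.inv₀ ?_ ?_)) continuousOn_const
      · exact (continuous_const.sub (continuous_const.mul continuous_id)).continuousOn
      · exact (continuous_const.sub (continuous_const.mul continuous_id)).continuousOn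
      · exact fun y hy => (den_pos6 hq0 hq1 hy.1 hy.2).ne'
  -- pointwise identity on [0,1]
  have hpt : ∀ y ∈ Icc (0:ℝ) 1, F y =
      ((1 - q * y)⁻¹ * y ^ (n+1) - m * ((1 - q * y)⁻¹ * y ^ n)) -
        c * ((1 - p * y)⁻¹ * y ^ (n+1) - m * ((1 - p * y)⁻¹ * y ^ n)) := by
    intro y hy
    have hdp : (1 - p * y) ≠ 0 := (den_pos6 hp0 hp1 hy.1 hy.2).ne'
    have hdq : (1 - q * y) ≠ 0 := (den_pos6 hq0 hq1 hy.1 hy.2).ne'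
    have hdpm : (1 - p * m) ≠ 0 := (den_pos6 hp0 hp1 hm0.le hm1.le).ne'
    have hdqm : (1 - q * m) ≠ 0 := (den_pos6 hq0 hq1 hm0.le hm1.le).ne'
    simp only [hF, hh, hc]
    field_simp
    ring
  -- compute the integral of F
  have hD : (∫ y in (0:ℝ)..1, F y) = (Aq - m * Bq) - c * (Ap - m * Bp) := by
    rw [intervalIntegral.integral_congr (fun y hy => hpt y (by rwa [uIcc_of_le one_pos.le] at hy))]
    rw [intervalIntegral.integral_sub, intervalIntegral.integral_const_mul,
        intervalIntegral.integral_sub, intervalIntegral.integral_const_mul,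
        intervalIntegral.integral_sub, intervalIntegral.integral_const_mul]
    · exact intble6 hp0 hp1 (n+1) h01 h11
    · exact (intble6 hp0 hp1 n h01 h11).const_mul m
    · exact intble6 hq0 hq1 (n+1) h01 h11
    · exact (intble6 hq0 hq1 n h01 h11).const_mul m
    · exact (intble6 hq0 hq1 (n+1) h01 h11).sub ((intble6 hq0 hq1 n h01 h11).const_mul m)
    · exact ((intble6 hp0 hp1 (n+1) h01 h11).sub ((intble6 hp0 hp1 n h01 h11).const_mul m)).const_mul c
  have hApm : Ap - m * Bp = 0 := by
    rw [hm]; field_simp; ring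
  -- positivity of the integral of F
  have hFint1 : IntervalIntegrable F volume 0 m :=
    (hFcont.mono (uIcc_subset_Icc h01 hmIcc)).intervalIntegrable
  have hFint2 : IntervalIntegrable F volume m 1 :=
    (hFcont.mono (uIcc_subset_Icc hmIcc h11)).intervalIntegrable
  have hpos1 : 0 < ∫ y in (0:ℝ)..m, F y := by
    refine intervalIntegral.intervalIntegral_pos_of_pos_on hFint1 (fun y hy => ?_) hm0
    have hyI : y ∈ Icc (0:ℝ) 1 := ⟨hy.1.le, hy.2.le.trans hm1.le⟩
    have h1 : 0 < (1 - p * y)⁻¹ * y ^ n :=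
      mul_pos (inv_pos.2 (den_pos6 hp0 hp1 hyI.1 hyI.2)) (pow_pos hy.1 n)
    have h2 : y - m < 0 := sub_neg.2 hy.2
    have h3 : h y - c < 0 := sub_neg.2 (hmono y hyI m hmIcc hy.2)
    exact mul_pos h1 (mul_pos_of_neg_of_neg h2 h3)
  have hpos2 : 0 < ∫ y in m..(1:ℝ), F y := by
    refine intervalIntegral.intervalIntegral_pos_of_pos_on hFint2 (fun y hy => ?_) hm1
    have hyI : y ∈ Icc (0:ℝ) 1 := ⟨hm0.le.trans hy.1.le, hy.2.le⟩
    have h1 : 0 < (1 - p * y)⁻¹ * y ^ n :=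
      mul_pos (inv_pos.2 (den_pos6 hp0 hp1 hyI.1 hyI.2)) (pow_pos (hm0.trans hy.1) n)
    have h2 : 0 < y - m := sub_pos.2 hy.1
    have h3 : 0 < h y - c := sub_pos.2 (hmono m hmIcc y hyI hy.1)
    exact mul_pos h1 (mul_pos h2 h3)
  have hsplit : (∫ y in (0:ℝ)..m, F y) + (∫ y in m..(1:ℝ), F y) = ∫ y in (0:ℝ)..1, F y :=
    intervalIntegral.integral_add_adjacent_intervals hFint1 hFint2
  have hDpos : 0 < Aq - m * Bq := by
    have := hsplit
    rw [hD, hApm, mul_zero, sub_zero] at this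
    linarith
  -- conclude
  have : m < Aq / Bq := (lt_div_iff₀ hBqpos).2 (by linarith)
  rw [hm, div_lt_div_iff₀ hBpos hBqpos] at this
  linarith
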